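/- Let Q be an n×n real diagonal matrix and G an n×n real matrix such that Q − G and Q − G' are invertible, where G' = (G + Gᵀ)/2. Let α ∈ ℝⁿ, c ∈ ℝ, v = (α − c·1)/2, and define the price vector p₁ = α − (Q − G)(Q − G')⁻¹ v and the investment vector x₁ = (Q − G)⁻¹(α − p₁). Then x₁ = (Q − G')⁻¹ v, and the profit satisfies (p₁ − c·1)ᵀ x₁ = vᵀ (Q − G')⁻¹ v. -/

import Mathlib

open Matrix

/-- Theorem 3 (profit under price discrimination): with `p₁ = α - (Q - G)(Q - G')⁻¹ v` and
`x₁ = (Q - G)⁻¹(α - p₁)`, one has `x₁ = (Q - G')⁻¹ v` and profit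
`(p₁ - c·1)ᵀ x₁ = vᵀ (Q - G')⁻¹ v`, where `G' = (G + Gᵀ)/2` and `v = (α - c·1)/2`. -/
theorem profit_with_externalities
    (n : ℕ) (Q G : Matrix (Fin n) (Fin n) ℝ) (hQ : Q.IsDiag)
    (h1 : IsUnit (Q - G)) (h2 : IsUnit (Q - (2:ℝ)⁻¹ • (G + Gᵀ)))
    (α : Fin n → ℝ) (c : ℝ) (v p₁ x₁ : Fin n → ℝ)
    (hv : v = (2:ℝ)⁻¹ • (α - c • (1 : Fin n → ℝ)))
    (hp : p₁ = α - ((Q - G) * (Q - (2:ℝ)⁻¹ • (G + Gᵀ))⁻¹) *ᵥ v)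
    (hx : x₁ = (Q - G)⁻¹ *ᵥ (α - p₁)) :
    x₁ = (Q - (2:ℝ)⁻¹ • (G + Gᵀ))⁻¹ *ᵥ v ∧
    (p₁ - c • (1 : Fin n → ℝ)) ⬝ᵥ x₁ = v ⬝ᵥ ((Q - (2:ℝ)⁻¹ • (G + Gᵀ))⁻¹ *ᵥ v) := by
  set A := Q - G with hA
  set S := Q - (2:ℝ)⁻¹ • (G + Gᵀ) with hS
  have hAdet : IsUnit A.det := (isUnit_iff_isUnit_det A).mp h1
  have hSdet : IsUnit S.det := (isUnit_iff_isUnit_det S).mp h2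
  set u := S⁻¹ *ᵥ v with hu
  -- x₁ = u
  have hxu : x₁ = u := by
    rw [hx, hp]
    simp only [sub_sub_cancel, mulVec_mulVec, ← Matrix.mul_assoc,
      Matrix.nonsing_inv_mul A hAdet, Matrix.one_mul]
    exact hu.symm
  -- S *ᵥ u = v
  have hSu : S *ᵥ u = v := by
    rw [hu, mulVec_mulVec, Matrix.mul_nonsing_inv S hSdet, one_mulVec]
  -- Aᵀ + A = 2 • S
  have hQsymm : Qᵀ = Q := hQ.isSymm
  have hAS : Aᵀ + A = (2:ℝ) • S := by
    rw [hA, hS, transpose_sub, hQsymm]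
    module
  -- (A *ᵥ u) ⬝ᵥ u = u ⬝ᵥ v
  have hkey : (A *ᵥ u) ⬝ᵥ u = u ⬝ᵥ v := by
    have h2' : u ⬝ᵥ ((Aᵀ + A) *ᵥ u) = (2:ℝ) * (u ⬝ᵥ v) := by
      rw [hAS, smul_mulVec, hSu, dotProduct_smul, smul_eq_mul]
    have h3 : u ⬝ᵥ (Aᵀ *ᵥ u) = (A *ᵥ u) ⬝ᵥ u := by
      rw [mulVec_transpose, dotProduct_comm, ← dotProduct_mulVec]
      exact dotProduct_comm _ _
    rw [add_mulVec, dotProduct_add, h3, dotProduct_comm u (A *ᵥ u)] at h2'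
    linarith
  refine ⟨hxu, ?_⟩
  have hpc : p₁ - c • (1 : Fin n → ℝ) = (2:ℝ) • v - A *ᵥ u := by
    have h2v : (2:ℝ) • v = α - c • (1 : Fin n → ℝ) := by rw [hv]; module
    rw [hp, ← mulVec_mulVec, ← hu, h2v]
    abel
  rw [hxu, hpc, sub_dotProduct, smul_dotProduct, hkey, smul_eq_mul]
  rw [dotProduct_comm u v]
  ring
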